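/- Let d ≥ 3, let 0 ≤ δ < 1/3, and let (L, R) be a δ-deterministic QIVPM on ℂ^d. Define L^D and R^D on projectors by L^D P = R^D P = 0 whenever R P ≤ δ and L^D P = R^D P = 1 whenever L P ≥ 1 − δ. Then these two cases are mutually exclusive and exhaust all projectors, and (L^D, R^D) is a 0-deterministic QIVPM on ℂ^d. -/
import Mathlib


open Matrix
open scoped ComplexOrder

/-- A projector on `ℂ^d`: an idempotent, self-adjoint matrix. -/
def IsProjector {d : ℕ} (P : Matrix (Fin d) (Fin d) ℂ) : Prop :=
  P * P = P ∧ Pᴴ = P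

/-- A quantum interval-valued probability measure (QIVPM) on `ℂ^d`,
given by the pair of interval-endpoint functions `L ≤ R`. -/
def IsQIVPM {d : ℕ} (L R : Matrix (Fin d) (Fin d) ℂ → ℝ) : Prop :=
  (∀ P, IsProjector P → 0 ≤ L P ∧ L P ≤ R P ∧ R P ≤ 1) ∧
  (L 0 = 0 ∧ R 0 = 0) ∧
  (L 1 = 1 ∧ R 1 = 1) ∧
  (∀ P, IsProjector P → L (1 - P) = 1 - R P ∧ R (1 - P) = 1 - L P) ∧
  (∀ P₀ P₁, IsProjector P₀ → IsProjector P₁ → P₀ * P₁ = P₁ * P₀ →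
    L P₀ + L P₁ ≤ L (P₀ + P₁ - P₀ * P₁) + L (P₀ * P₁) ∧
    R (P₀ + P₁ - P₀ * P₁) + R (P₀ * P₁) ≤ R P₀ + R P₁)

/-- A QIVPM is `δ`-deterministic if every projector's interval lies in `[0,δ]` or `[1-δ,1]`. -/
def IsDeltaDet {d : ℕ} (δ : ℝ) (L R : Matrix (Fin d) (Fin d) ℂ → ℝ) : Prop :=
  ∀ P, IsProjector P → R P ≤ δ ∨ 1 - δ ≤ L P

/-- A QIVPM is `0`-deterministic if every projector is assigned `[0,0]` or `[1,1]`. -/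
def IsZeroDet {d : ℕ} (L R : Matrix (Fin d) (Fin d) ℂ → ℝ) : Prop :=
  ∀ P, IsProjector P → (L P = 0 ∧ R P = 0) ∨ (L P = 1 ∧ R P = 1)

/-- A state (density matrix) on `ℂ^d`. -/
def IsState {d : ℕ} (ρ : Matrix (Fin d) (Fin d) ℂ) : Prop :=
  ρ.PosSemidef ∧ ρ.trace = 1

/-- From a `δ`-deterministic QIVPM with `δ < 1/3` one obtains a 0-deterministic QIVPM
by collapsing the two (mutually exclusive and exhaustive) cases to `[0,0]` and `[1,1]`. -/
theorem deltaDet_to_zeroDet (d : ℕ) (hd : 3 ≤ d) (δ : ℝ) (hδ0 : 0 ≤ δ) (hδ : δ < 1/3)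
    (L R : Matrix (Fin d) (Fin d) ℂ → ℝ)
    (hQ : IsQIVPM L R) (hdet : IsDeltaDet δ L R)
    (LD RD : Matrix (Fin d) (Fin d) ℂ → ℝ)
    (hD0 : ∀ P, IsProjector P → R P ≤ δ → LD P = 0 ∧ RD P = 0)
    (hD1 : ∀ P, IsProjector P → 1 - δ ≤ L P → LD P = 1 ∧ RD P = 1) :
    (∀ P, IsProjector P → ¬ (R P ≤ δ ∧ 1 - δ ≤ L P)) ∧
    (∀ P, IsProjector P → R P ≤ δ ∨ 1 - δ ≤ L P) ∧
    IsQIVPM LD RD ∧ IsZeroDet LD RD := by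
  obtain ⟨hbd, ⟨hL0, hR0⟩, ⟨hL1, hR1⟩, hcompl, hconv⟩ := hQ
  have excl : ∀ P, IsProjector P → ¬ (R P ≤ δ ∧ 1 - δ ≤ L P) := by
    rintro P hP ⟨h1, h2⟩
    have := (hbd P hP).2.1
    linarith
  have key : ∀ P, IsProjector P →
      (LD P = 0 ∧ RD P = 0 ∧ L P ≤ δ ∧ R P ≤ δ) ∨
      (LD P = 1 ∧ RD P = 1 ∧ 1 - δ ≤ L P ∧ 1 - δ ≤ R P) := by
    intro P hP
    have hb := hbd P hP
    rcases hdet P hP with h | h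
    · obtain ⟨h1, h2⟩ := hD0 P hP h
      exact Or.inl ⟨h1, h2, by linarith [hb.2.1], h⟩
    · obtain ⟨h1, h2⟩ := hD1 P hP h
      exact Or.inr ⟨h1, h2, h, by linarith [hb.2.1]⟩
  have projZero : IsProjector (0 : Matrix (Fin d) (Fin d) ℂ) := ⟨by simp, by simp⟩
  have projOne : IsProjector (1 : Matrix (Fin d) (Fin d) ℂ) := ⟨one_mul 1, by simp⟩
  have projCompl : ∀ P : Matrix (Fin d) (Fin d) ℂ, IsProjector P → IsProjector (1 - P) := by
    rintro P ⟨h1, h2⟩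
    refine ⟨?_, by simp [h2]⟩
    have e : (1 - P) * (1 - P) = 1 - P - P + P * P := by noncomm_ring
    rw [e, h1]; abel
  have projProd : ∀ P₀ P₁ : Matrix (Fin d) (Fin d) ℂ, IsProjector P₀ → IsProjector P₁ →
      P₀ * P₁ = P₁ * P₀ → IsProjector (P₀ * P₁) := by
    rintro P₀ P₁ ⟨h1, h2⟩ ⟨h3, h4⟩ hc
    constructor
    · calc P₀ * P₁ * (P₀ * P₁) = P₀ * (P₁ * P₀ * P₁) := by rw [mul_assoc, mul_assoc]
      _ = P₀ * (P₀ * P₁ * P₁) := by rw [← hc]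
      _ = P₀ * (P₀ * (P₁ * P₁)) := by rw [mul_assoc P₀ P₁ P₁]
      _ = P₀ * P₁ := by rw [h3, ← mul_assoc, h1]
    · rw [conjTranspose_mul, h2, h4, ← hc]
  have projQ : ∀ P₀ P₁ : Matrix (Fin d) (Fin d) ℂ, IsProjector P₀ → IsProjector P₁ →
      P₀ * P₁ = P₁ * P₀ → IsProjector (P₀ + P₁ - P₀ * P₁) := by
    rintro P₀ P₁ ⟨h1, h2⟩ ⟨h3, h4⟩ hc
    have e1 : P₀ * (P₀ * P₁) = P₀ * P₁ := by rw [← mul_assoc, h1]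
    have e2 : (P₀ * P₁) * P₁ = P₀ * P₁ := by rw [mul_assoc, h3]
    have e3 : P₁ * (P₀ * P₁) = P₀ * P₁ := by rw [← mul_assoc, ← hc, mul_assoc, h3]
    have e4 : (P₀ * P₁) * P₀ = P₀ * P₁ := by rw [hc, mul_assoc, h1]
    have e5 : (P₀ * P₁) * (P₀ * P₁) = P₀ * P₁ := by rw [← mul_assoc, e4, e2]
    constructor
    · have e : (P₀ + P₁ - P₀ * P₁) * (P₀ + P₁ - P₀ * P₁) =
          P₀ * P₀ + P₀ * P₁ + P₁ * P₀ + P₁ * P₁ - P₀ * (P₀ * P₁) - P₁ * (P₀ * P₁)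
            - (P₀ * P₁) * P₀ - (P₀ * P₁) * P₁ + (P₀ * P₁) * (P₀ * P₁) := by noncomm_ring
      rw [e, h1, h3, e1, e2, e3, e4, e5, hc]; abel
    · rw [conjTranspose_sub, conjTranspose_add, conjTranspose_mul, h2, h4, ← hc]
  refine ⟨excl, hdet, ⟨?_, ?_, ?_, ?_, ?_⟩, ?_⟩
  · intro P hP
    rcases key P hP with ⟨e1, e2, _, _⟩ | ⟨e1, e2, _, _⟩ <;> rw [e1, e2] <;> norm_num
  · exact hD0 0 projZero (by rw [hR0]; exact hδ0)
  · exact hD1 1 projOne (by linarith)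
  · intro P hP
    have hc := hcompl P hP
    have hC := projCompl P hP
    rcases key P hP with ⟨e1, e2, h3, h4⟩ | ⟨e1, e2, h3, h4⟩
    · obtain ⟨f1, f2⟩ := hD1 (1 - P) hC (by linarith [hc.1])
      rw [e1, e2, f1, f2]; norm_num
    · obtain ⟨f1, f2⟩ := hD0 (1 - P) hC (by linarith [hc.2])
      rw [e1, e2, f1, f2]; norm_num
  · intro P₀ P₁ h0 h1 hcm
    have hS := projProd P₀ P₁ h0 h1 hcm
    have hQp := projQ P₀ P₁ h0 h1 hcm
    have hcv := hconv P₀ P₁ h0 h1 hcm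
    have b0 := hbd P₀ h0
    have b1 := hbd P₁ h1
    have bS := hbd _ hS
    have bQ := hbd _ hQp
    rcases key P₀ h0 with ⟨e1, e2, e3, e4⟩ | ⟨e1, e2, e3, e4⟩ <;>
      rcases key P₁ h1 with ⟨f1, f2, f3, f4⟩ | ⟨f1, f2, f3, f4⟩ <;>
      rcases key _ hS with ⟨g1, g2, g3, g4⟩ | ⟨g1, g2, g3, g4⟩ <;>
      rcases key _ hQp with ⟨i1, i2, i3, i4⟩ | ⟨i1, i2, i3, i4⟩ <;>
      rw [e1, e2, f1, f2, g1, g2, i1, i2] <;>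
      constructor <;>
      linarith [hcv.1, hcv.2, b0.1, b0.2.1, b0.2.2, b1.1, b1.2.1, b1.2.2,
        bS.1, bS.2.1, bS.2.2, bQ.1, bQ.2.1, bQ.2.2]
  · intro P hP
    rcases key P hP with ⟨e1, e2, _, _⟩ | ⟨e1, e2, _, _⟩
    · exact Or.inl ⟨e1, e2⟩
    · exact Or.inr ⟨e1, e2⟩
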